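/- Let X and Y be independent absolutely continuous nonnegative random variables with cdfs F and G and continuously differentiable pdfs f and g which are strictly positive on (0,∞), with F(t) > 0 and G(t) > 0 for all t > 0. Then the reversed relevation transform is commutative, i.e. G#̃F(x) = F#̃G(x) for all x > 0, if and only if X and Y satisfy the proportional reversed hazards rate model, i.e. there exists a constant θ > 0 such that G(x) = [F(x)]^θ for all x > 0. -/

import Mathlib

open MeasureTheory Set Filter Topology

private lemma constAux {φ : ℝ → ℝ} (h : ∀ x : ℝ, 0 < x → HasDerivAt φ 0 x) :
    ∀ ⦃x y : ℝ⦄, 0 < x → 0 < y → φ x = φ y := by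
  have key : ∀ x y : ℝ, 0 < x → x ≤ y → φ y = φ x := by
    intro x y hx hxy
    refine constant_of_has_deriv_right_zero (f := φ) (a := x) (b := y) ?_ ?_ y ⟨hxy, le_rfl⟩
    · intro t ht
      exact (h t (lt_of_lt_of_le hx ht.1)).continuousAt.continuousWithinAt
    · intro t ht
      exact (h t (lt_of_lt_of_le hx ht.1)).hasDerivWithinAt
  intro x y hx hy
  rcases le_total x y with hxy | hxy
  · exact (key x y hx hxy).symm
  · exact key y x hy hxy

private lemma hasDerivAt_tail {h : ℝ → ℝ} (hc : ∀ y : ℝ, 0 < y → ContinuousAt h y)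
    (hint : ∀ x : ℝ, 0 < x → IntegrableOn h (Ioi x)) {x : ℝ} (hx : 0 < x) :
    HasDerivAt (fun y => ∫ t in Ioi y, h t) (-h x) x := by
  have ha : (0:ℝ) < x/2 := by linarith
  have hax : x/2 < x := by linarith
  have key : ∀ y : ℝ, x/2 < y →
      ∫ t in Ioi y, h t = (∫ t in Ioi (x/2), h t) - ∫ t in (x/2)..y, h t := by
    intro y hy
    have h1 : IntegrableOn h (Ioc (x/2) y) := (hint _ ha).mono_set Ioc_subset_Ioi_self
    have h2 : IntegrableOn h (Ioi y) := hint y (ha.trans hy)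
    rw [intervalIntegral.integral_of_le hy.le]
    have hsplit := MeasureTheory.setIntegral_union (Ioc_disjoint_Ioi le_rfl)
      measurableSet_Ioi h1 h2
    rw [Ioc_union_Ioi_eq_Ioi hy.le] at hsplit
    rw [hsplit]; ring
  have hii : IntervalIntegrable h volume (x/2) x := by
    rw [intervalIntegrable_iff_integrableOn_Ioc_of_le hax.le]
    exact (hint _ ha).mono_set Ioc_subset_Ioi_self
  have hmeas : StronglyMeasurableAtFilter h (𝓝 x) := by
    refine ⟨Ioi 0, Ioi_mem_nhds hx, ?_⟩
    exact (continuousOn_of_forall_continuousAt fun t ht => hc t ht).aestronglyMeasurable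
      measurableSet_Ioi
  have hD : HasDerivAt (fun y => (∫ t in Ioi (x/2), h t) - ∫ t in (x/2)..y, h t) (-h x) x :=
    (intervalIntegral.integral_hasDerivAt_right hii hmeas (hc x hx)).const_sub _
  refine hD.congr_of_eventuallyEq ?_
  filter_upwards [Ioi_mem_nhds hax] with y hy using key y hy

private lemma tail_pos {h : ℝ → ℝ} (hpos : ∀ t : ℝ, 0 < t → 0 < h t) {x : ℝ}
    (hint : IntegrableOn h (Ioi x)) (hx : 0 < x) : 0 < ∫ t in Ioi x, h t := by
  rw [setIntegral_pos_iff_support_of_nonneg_ae ?_ hint]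
  · have hsub : Ioi x ⊆ Function.support h ∩ Ioi x := fun t ht =>
      ⟨(hpos t (hx.trans ht)).ne', ht⟩
    calc (0:ENNReal) < volume (Ioi x) := by simp [Real.volume_Ioi]
      _ ≤ volume (Function.support h ∩ Ioi x) := measure_mono hsub
  · refine (ae_restrict_iff' measurableSet_Ioi).2 ?_
    exact Eventually.of_forall fun t ht => (hpos t (hx.trans ht)).le


/-- The reversed relevation transform is commutative,
`G#̃F(x) = F#̃G(x)` for all `x > 0`, if and only if `X` and `Y` satisfy the proportional
reversed hazards rate model, i.e. there is `θ > 0` with `G x = (F x)^θ` for all `x > 0`. -/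
theorem reversed_relevation_comm_iff_prhr
    (F G f g : ℝ → ℝ)
    (hfC : ContDiff ℝ 1 f) (hgC : ContDiff ℝ 1 g)
    (hfpos : ∀ x, 0 < x → 0 < f x) (hgpos : ∀ x, 0 < x → 0 < g x)
    (hf : ∀ x, 0 < x → HasDerivAt F (f x) x)
    (hg : ∀ x, 0 < x → HasDerivAt G (g x) x)
    (hFpos : ∀ t, 0 < t → 0 < F t) (hGpos : ∀ t, 0 < t → 0 < G t)
    (hFle : ∀ t, F t ≤ 1) (hGle : ∀ t, G t ≤ 1)
    (hFlim : Tendsto F atTop (nhds 1)) (hGlim : Tendsto G atTop (nhds 1))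
    (hint1 : ∀ x, 0 < x → IntegrableOn (fun t => g t / F t) (Ioi x))
    (hint2 : ∀ x, 0 < x → IntegrableOn (fun t => f t / G t) (Ioi x)) :
    (∀ x, 0 < x →
        G x + F x * ∫ t in Ioi x, g t / F t
          = F x + G x * ∫ t in Ioi x, f t / G t)
      ↔ ∃ θ : ℝ, 0 < θ ∧ ∀ x, 0 < x → G x = F x ^ θ := by
  constructor
  · intro hE
    set I : ℝ → ℝ := fun y => ∫ t in Ioi y, g t / F t with hIdef
    set J : ℝ → ℝ := fun y => ∫ t in Ioi y, f t / G t with hJdef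
    have hgFc : ∀ y : ℝ, 0 < y → ContinuousAt (fun t => g t / F t) y := fun y hy =>
      (hgC.continuous.continuousAt).div (hf y hy).continuousAt (hFpos y hy).ne'
    have hfGc : ∀ y : ℝ, 0 < y → ContinuousAt (fun t => f t / G t) y := fun y hy =>
      (hfC.continuous.continuousAt).div (hg y hy).continuousAt (hGpos y hy).ne'
    have hdI : ∀ x : ℝ, 0 < x → HasDerivAt I (-(g x / F x)) x := fun x hx =>
      hasDerivAt_tail hgFc hint1 hx
    have hdJ : ∀ x : ℝ, 0 < x → HasDerivAt J (-(f x / G x)) x := fun x hx =>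
      hasDerivAt_tail hfGc hint2 hx
    have hdf : ∀ x : ℝ, HasDerivAt f (deriv f x) x := fun x =>
      ((hfC.differentiable one_ne_zero) x).hasDerivAt
    have hdg : ∀ x : ℝ, HasDerivAt g (deriv g x) x := fun x =>
      ((hgC.differentiable one_ne_zero) x).hasDerivAt
    -- Step 1: f I = g J on (0, ∞)
    have step1 : ∀ x : ℝ, 0 < x → f x * I x = g x * J x := by
      intro x hx
      have hP : HasDerivAt (fun y => G y + F y * I y - (F y + G y * J y))
          (g x + (f x * I x + F x * -(g x / F x)) -
            (f x + (g x * J x + G x * -(f x / G x)))) x :=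
        (((hg x hx).add ((hf x hx).mul (hdI x hx))).sub
          ((hf x hx).add ((hg x hx).mul (hdJ x hx))))
      have hP0 : HasDerivAt (fun y => G y + F y * I y - (F y + G y * J y)) 0 x := by
        refine (hasDerivAt_const x (0:ℝ)).congr_of_eventuallyEq ?_
        filter_upwards [Ioi_mem_nhds hx] with y hy
        simp [sub_eq_zero, hE y hy]
        exact hE y hy
      have h0 := hP.unique hP0
      have hFne : F x ≠ 0 := (hFpos x hx).ne'
      have hGne : G x ≠ 0 := (hGpos x hx).ne'
      field_simp at h0
      have hkey : (F x * G x) * (f x * I x) = (F x * G x) * (g x * J x) := by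
        linear_combination (F x * G x) * h0
      exact mul_left_cancel₀ (mul_ne_zero hFne hGne) hkey
    -- Step 2: differentiate step1
    have step2 : ∀ x : ℝ, 0 < x →
        deriv f x * I x + f x * -(g x / F x) - (deriv g x * J x + g x * -(f x / G x)) = 0 := by
      intro x hx
      have hQ : HasDerivAt (fun y => f y * I y - g y * J y)
          (deriv f x * I x + f x * -(g x / F x) -
            (deriv g x * J x + g x * -(f x / G x))) x :=
        ((hdf x).mul (hdI x hx)).sub ((hdg x).mul (hdJ x hx))
      have hQ0 : HasDerivAt (fun y => f y * I y - g y * J y) 0 x := by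
        refine (hasDerivAt_const x (0:ℝ)).congr_of_eventuallyEq ?_
        filter_upwards [Ioi_mem_nhds hx] with y hy
        simp [sub_eq_zero, step1 y hy]
      exact hQ.unique hQ0
    -- Step 3: g (G - F) = I (f G - g F)
    have step3 : ∀ x : ℝ, 0 < x →
        g x * (G x - F x) = I x * (f x * G x - g x * F x) := by
      intro x hx
      linear_combination g x * (hE x hx) - G x * (step1 x hx)
    -- Step 4: the ODE
    have step4 : ∀ x : ℝ, 0 < x →
        (deriv f x * g x - deriv g x * f x) * (F x * G x)
          = f x * g x * (f x * G x - g x * F x) := by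
      intro x hx
      have hIpos : 0 < I x := tail_pos
        (fun t ht => div_pos (hgpos t ht) (hFpos t ht)) (hint1 x hx) hx
      have h2 := step2 x hx
      have h1 := step1 x hx
      have h3 := step3 x hx
      have hFne : F x ≠ 0 := (hFpos x hx).ne'
      have hGne : G x ≠ 0 := (hGpos x hx).ne'
      refine mul_left_cancel₀ hIpos.ne' ?_
      field_simp at h2
      linear_combination g x * h2 - deriv g x * F x * G x * h1 + f x * g x * h3
    -- Step 5: the function log(gF) - log(fG) is constant
    set θ : ℝ := (g 1 * F 1) / (f 1 * G 1) with hθdef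
    have hθpos : 0 < θ := div_pos (mul_pos (hgpos 1 one_pos) (hFpos 1 one_pos))
      (mul_pos (hfpos 1 one_pos) (hGpos 1 one_pos))
    have hφd : ∀ x : ℝ, 0 < x → HasDerivAt
        (fun y => Real.log (g y) + Real.log (F y) - Real.log (f y) - Real.log (G y)) 0 x := by
      intro x hx
      have hfne : f x ≠ 0 := (hfpos x hx).ne'
      have hgne : g x ≠ 0 := (hgpos x hx).ne'
      have hFne : F x ≠ 0 := (hFpos x hx).ne'
      have hGne : G x ≠ 0 := (hGpos x hx).ne'
      have hD : HasDerivAt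
          (fun y => Real.log (g y) + Real.log (F y) - Real.log (f y) - Real.log (G y))
          (deriv g x / g x + f x / F x - deriv f x / f x - g x / G x) x :=
        ((((hdg x).log hgne).add ((hf x hx).log hFne)).sub ((hdf x).log hfne)).sub
          ((hg x hx).log hGne)
      have h4 := step4 x hx
      have hzero : deriv g x / g x + f x / F x - deriv f x / f x - g x / G x = 0 := by
        field_simp
        linear_combination -h4
      rwa [hzero] at hD
    have hφc := constAux hφd
    -- ratio g F / (f G) is the constant θ
    have hratio : ∀ x : ℝ, 0 < x → g x * F x = θ * (f x * G x) := by
      intro x hx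
      have hc := hφc hx one_pos
      have hfne : (0:ℝ) < f x := hfpos x hx
      have hgne : (0:ℝ) < g x := hgpos x hx
      have hFne : (0:ℝ) < F x := hFpos x hx
      have hGne : (0:ℝ) < G x := hGpos x hx
      have hf1 : (0:ℝ) < f 1 := hfpos 1 one_pos
      have hg1 : (0:ℝ) < g 1 := hgpos 1 one_pos
      have hF1 : (0:ℝ) < F 1 := hFpos 1 one_pos
      have hG1 : (0:ℝ) < G 1 := hGpos 1 one_pos
      have heq := congrArg Real.exp hc
      simp only [Real.exp_sub, Real.exp_add, Real.exp_log hgne, Real.exp_log hFne,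
        Real.exp_log hfne, Real.exp_log hGne, Real.exp_log hg1, Real.exp_log hF1,
        Real.exp_log hf1, Real.exp_log hG1] at heq
      rw [hθdef]
      field_simp at heq ⊢
      linear_combination heq
    -- Step 6: ψ = log G - θ log F is constant with limit 0
    have hψd : ∀ x : ℝ, 0 < x →
        HasDerivAt (fun y => Real.log (G y) - θ * Real.log (F y)) 0 x := by
      intro x hx
      have hFne : F x ≠ 0 := (hFpos x hx).ne'
      have hGne : G x ≠ 0 := (hGpos x hx).ne'
      have hD : HasDerivAt (fun y => Real.log (G y) - θ * Real.log (F y))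
          (g x / G x - θ * (f x / F x)) x :=
        ((hg x hx).log hGne).sub (((hf x hx).log hFne).const_mul θ)
      have hzero : g x / G x - θ * (f x / F x) = 0 := by
        field_simp
        linear_combination hratio x hx
      rwa [hzero] at hD
    have hψc := constAux hψd
    have hψlim : Tendsto (fun y => Real.log (G y) - θ * Real.log (F y)) atTop (𝓝 0) := by
      have hlG : Tendsto (fun y => Real.log (G y)) atTop (𝓝 0) := by
        have := (Real.continuousAt_log one_ne_zero).tendsto.comp hGlim
        simpa [Function.comp_def] using this
      have hlF : Tendsto (fun y => Real.log (F y)) atTop (𝓝 0) := by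
        have := (Real.continuousAt_log one_ne_zero).tendsto.comp hFlim
        simpa [Function.comp_def] using this
      have := hlG.sub (hlF.const_mul θ)
      simpa using this
    have hψzero : ∀ x : ℝ, 0 < x → Real.log (G x) - θ * Real.log (F x) = 0 := by
      intro x hx
      have hconst : Tendsto (fun y => Real.log (G y) - θ * Real.log (F y)) atTop
          (𝓝 (Real.log (G x) - θ * Real.log (F x))) := by
        refine Tendsto.congr' ?_ tendsto_const_nhds
        filter_upwards [Ioi_mem_atTop 0] with y hy
        exact hψc hx (mem_Ioi.mp hy)
      exact tendsto_nhds_unique hconst hψlim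
    refine ⟨θ, hθpos, fun x hx => ?_⟩
    have h0 := hψzero x hx
    rw [Real.rpow_def_of_pos (hFpos x hx), ← Real.exp_log (hGpos x hx)]
    congr 1
    linarith
  · rintro ⟨θ, hθ, hGF⟩ x hx
    -- derivative identity: g = θ f F^(θ-1) on (0,∞)
    have hgf : ∀ y : ℝ, 0 < y → g y = f y * θ * F y ^ (θ - 1) := by
      intro y hy
      have hd : HasDerivAt (fun z => F z ^ θ) (f y * θ * F y ^ (θ - 1)) y :=
        (hf y hy).rpow_const (Or.inl (hFpos y hy).ne')
      have hd' : HasDerivAt G (f y * θ * F y ^ (θ - 1)) y := by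
        refine hd.congr_of_eventuallyEq ?_
        filter_upwards [Ioi_mem_nhds hy] with z hz using hGF z hz
      exact (hg y hy).unique hd'
    by_cases hθ1 : θ = 1
    · subst hθ1
      have hGFx : ∀ y : ℝ, 0 < y → G y = F y := by
        intro y hy
        simpa using hGF y hy
      have hfgx : ∀ y : ℝ, 0 < y → g y = f y := by
        intro y hy
        simpa using hgf y hy
      have hIeq : ∫ t in Ioi x, g t / F t = ∫ t in Ioi x, f t / G t := by
        refine setIntegral_congr_fun measurableSet_Ioi fun t ht => ?_
        have ht' : 0 < t := hx.trans ht
        rw [hfgx t ht', hGFx t ht']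
      rw [hIeq, hGFx x hx]
    · have hθ1' : θ - 1 ≠ 0 := sub_ne_zero.mpr hθ1
      have hθ1'' : 1 - θ ≠ 0 := sub_ne_zero.mpr (Ne.symm hθ1)
      -- compute the first integral
      have hIval : ∫ t in Ioi x, g t / F t
          = θ / (θ - 1) - θ / (θ - 1) * F x ^ (θ - 1) := by
        have hderiv : ∀ t ∈ Ioi x, HasDerivAt (fun z => θ / (θ - 1) * F z ^ (θ - 1))
            (g t / F t) t := by
          intro t ht
          have ht' : 0 < t := hx.trans ht
          have hFt : (0:ℝ) < F t := hFpos t ht'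
          have hd : HasDerivAt (fun z => F z ^ (θ - 1)) (f t * (θ - 1) * F t ^ (θ - 1 - 1)) t :=
            (hf t ht').rpow_const (Or.inl hFt.ne')
          have hD := hd.const_mul (θ / (θ - 1))
          have hr : F t ^ (θ - 1 - 1) = F t ^ (θ - 1) / F t :=
            Real.rpow_sub_one hFt.ne' _
          have heq : θ / (θ - 1) * (f t * (θ - 1) * F t ^ (θ - 1 - 1)) = g t / F t := by
            rw [hgf t ht', hr]
            field_simp
          rwa [heq] at hD
        have hcont : ContinuousWithinAt (fun z => θ / (θ - 1) * F z ^ (θ - 1)) (Ici x) x := by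
          have hd : HasDerivAt (fun z => F z ^ (θ - 1)) (f x * (θ - 1) * F x ^ (θ - 1 - 1)) x :=
            (hf x hx).rpow_const (Or.inl (hFpos x hx).ne')
          exact ((hd.const_mul (θ / (θ - 1))).continuousAt).continuousWithinAt
        have hlim : Tendsto (fun z => θ / (θ - 1) * F z ^ (θ - 1)) atTop (𝓝 (θ / (θ - 1))) := by
          have hc : ContinuousAt (fun y : ℝ => y ^ (θ - 1)) 1 :=
            Real.continuousAt_rpow_const 1 (θ - 1) (Or.inl one_ne_zero)
          have := (hc.tendsto.comp hFlim).const_mul (θ / (θ - 1))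
          simpa using this
        have := integral_Ioi_of_hasDerivAt_of_tendsto hcont hderiv (hint1 x hx) hlim
        linarith [this]
      -- compute the second integral
      have hJval : ∫ t in Ioi x, f t / G t
          = (1 - θ)⁻¹ - (1 - θ)⁻¹ * F x ^ (1 - θ) := by
        have hderiv : ∀ t ∈ Ioi x, HasDerivAt (fun z => (1 - θ)⁻¹ * F z ^ (1 - θ))
            (f t / G t) t := by
          intro t ht
          have ht' : 0 < t := hx.trans ht
          have hFt : (0:ℝ) < F t := hFpos t ht'
          have hd : HasDerivAt (fun z => F z ^ (1 - θ)) (f t * (1 - θ) * F t ^ (1 - θ - 1)) t :=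
            (hf t ht').rpow_const (Or.inl hFt.ne')
          have hD := hd.const_mul ((1 - θ)⁻¹)
          have hr : F t ^ (1 - θ - 1) = (F t ^ θ)⁻¹ := by
            rw [show (1:ℝ) - θ - 1 = -θ by ring, Real.rpow_neg hFt.le]
          have heq : (1 - θ)⁻¹ * (f t * (1 - θ) * F t ^ (1 - θ - 1)) = f t / G t := by
            rw [hGF t ht', hr]
            field_simp
          rwa [heq] at hD
        have hcont : ContinuousWithinAt (fun z => (1 - θ)⁻¹ * F z ^ (1 - θ)) (Ici x) x := by
          have hd : HasDerivAt (fun z => F z ^ (1 - θ)) (f x * (1 - θ) * F x ^ (1 - θ - 1)) x :=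
            (hf x hx).rpow_const (Or.inl (hFpos x hx).ne')
          exact ((hd.const_mul ((1 - θ)⁻¹)).continuousAt).continuousWithinAt
        have hlim : Tendsto (fun z => (1 - θ)⁻¹ * F z ^ (1 - θ)) atTop (𝓝 ((1 - θ)⁻¹)) := by
          have hc : ContinuousAt (fun y : ℝ => y ^ (1 - θ)) 1 :=
            Real.continuousAt_rpow_const 1 (1 - θ) (Or.inl one_ne_zero)
          have := (hc.tendsto.comp hFlim).const_mul ((1 - θ)⁻¹)
          simpa using this
        have := integral_Ioi_of_hasDerivAt_of_tendsto hcont hderiv (hint2 x hx) hlim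
        linarith [this]
      rw [hIval, hJval, hGF x hx]
      have haPos : (0:ℝ) < F x := hFpos x hx
      have h1 : F x * F x ^ (θ - 1) = F x ^ θ := by
        have := Real.rpow_add haPos 1 (θ - 1)
        rw [show (1:ℝ) + (θ - 1) = θ by ring, Real.rpow_one] at this
        exact this.symm
      have h2 : F x ^ θ * F x ^ (1 - θ) = F x := by
        have := Real.rpow_add haPos θ (1 - θ)
        rw [show θ + (1 - θ) = (1:ℝ) by ring, Real.rpow_one] at this
        exact this.symm
      have e1 : F x * (θ / (θ - 1) - θ / (θ - 1) * F x ^ (θ - 1))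
          = θ / (θ - 1) * (F x - F x ^ θ) := by linear_combination (-(θ / (θ - 1))) * h1
      have e2 : F x ^ θ * ((1 - θ)⁻¹ - (1 - θ)⁻¹ * F x ^ (1 - θ))
          = (1 - θ)⁻¹ * (F x ^ θ - F x) := by linear_combination (-(1 - θ)⁻¹) * h2
      rw [e1, e2]
      field_simp
      ring
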